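/- For all integers n ≥ k ≥ 1 and every l with 1 ≤ l ≤ k, the generating function of the statistic mak_l over P(n,k) equals the q-Stirling number of the second kind: Σ_{π∈P(n,k)} q^{mak_l(π)} = S_q(n,k) for every real q > 0 (the exponents mak_l(π) being integers). -/

import Mathlib

open Finset Polynomial

/-- A partition of `[n] = {1,…,n}` into `k` nonempty blocks `B₁-⋯-B_k`, indexed so that
`min B₁ < ⋯ < min B_k`, encoded by its restricted-growth word `w : Fin n → Fin k`
(the element `i+1` of `[n]` lies in the block `B_{w i + 1}`). -/
structure SetPartition (n k : ℕ) where
  w : Fin n → Fin k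
  surj : Function.Surjective w
  rgf : ∀ i : Fin n, ∀ c : Fin k, c < w i → ∃ j : Fin n, j < i ∧ w j = c

namespace SetPartition

variable {n k : ℕ}

instance : DecidableEq (SetPartition n k) := fun a b =>
  decidable_of_iff (a.w = b.w) (by cases a; cases b; simp)

noncomputable instance : Fintype (SetPartition n k) :=
  Fintype.ofInjective (fun π => π.w) (fun a b h => by cases a; cases b; simp_all)

/-- The set of openers (smallest elements of their blocks). -/
def openers (π : SetPartition n k) : Finset (Fin n) :=
  univ.filter fun i => ∀ j, j < i → π.w j ≠ π.w i

/-- The set of closers (largest elements of their blocks). -/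
def closers (π : SetPartition n k) : Finset (Fin n) :=
  univ.filter fun i => ∀ j, i < j → π.w j ≠ π.w i

/-- Closers that are not openers (`F_s`). -/
def closersOnly (π : SetPartition n k) : Finset (Fin n) := π.closers \ π.openers

/-- Openers that are not closers (`O_s`). -/
def openersOnly (π : SetPartition n k) : Finset (Fin n) := π.openers \ π.closers

/-- Elements that are neither openers nor closers (`P`, the transients). -/
def transients (π : SetPartition n k) : Finset (Fin n) :=
  univ \ (π.openers ∪ π.closers)

def ros (π : SetPartition n k) : ℕ :=
  ∑ i, (π.openers.filter fun j => j < i ∧ π.w i < π.w j).card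
def rob (π : SetPartition n k) : ℕ :=
  ∑ i, (π.openers.filter fun j => i < j ∧ π.w i < π.w j).card
def rcs (π : SetPartition n k) : ℕ :=
  ∑ i, (π.closers.filter fun j => j < i ∧ π.w i < π.w j).card
def rcb (π : SetPartition n k) : ℕ :=
  ∑ i, (π.closers.filter fun j => i < j ∧ π.w i < π.w j).card
def los (π : SetPartition n k) : ℕ :=
  ∑ i, (π.openers.filter fun j => j < i ∧ π.w j < π.w i).card
def lob (π : SetPartition n k) : ℕ :=
  ∑ i, (π.openers.filter fun j => i < j ∧ π.w j < π.w i).card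
def lcs (π : SetPartition n k) : ℕ :=
  ∑ i, (π.closers.filter fun j => j < i ∧ π.w j < π.w i).card
def lcb (π : SetPartition n k) : ℕ :=
  ∑ i, (π.closers.filter fun j => i < j ∧ π.w j < π.w i).card

def mak (π : SetPartition n k) : ℕ := π.ros + π.lcs
def mak' (π : SetPartition n k) : ℕ := π.lob + π.rcb
def lmak (π : SetPartition n k) : ℤ :=
  (n : ℤ) * ((k : ℤ) - 1) - ((π.los : ℤ) + (π.rcs : ℤ))
def lmak' (π : SetPartition n k) : ℤ :=
  (n : ℤ) * ((k : ℤ) - 1) - ((π.lcb : ℤ) + (π.rob : ℤ))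

/-- `rinv(b,π) = #{a : a < b, w_a > w_b}`. -/
def rinv (π : SetPartition n k) (b : Fin n) : ℕ :=
  (univ.filter fun a => a < b ∧ π.w b < π.w a).card

/-- `nrinv(b,π) = #{a : a > b, w_a > w_b}`. -/
def nrinv (π : SetPartition n k) (b : Fin n) : ℕ :=
  (univ.filter fun a => b < a ∧ π.w b < π.w a).card

/-- `linv(b,π) = #{a : a > b, w_a < w_b}`. -/
def linv (π : SetPartition n k) (b : Fin n) : ℕ :=
  (univ.filter fun a => b < a ∧ π.w a < π.w b).card

/-- `rinv(X,π) = Σ_{b ∈ X} rinv(b,π)`. -/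
def rinvSet (π : SetPartition n k) (X : Finset (Fin n)) : ℕ := ∑ b ∈ X, π.rinv b

/-- `linv(X,π) = Σ_{b ∈ X} linv(b,π)`. -/
def linvSet (π : SetPartition n k) (X : Finset (Fin n)) : ℕ := ∑ b ∈ X, π.linv b

/-- `g(B_c)`: the largest element of the block with index `c`. -/
def blockMax (π : SetPartition n k) (c : Fin k) : Fin n :=
  (univ.filter fun i => π.w i = c).max' (by
    obtain ⟨i, hi⟩ := π.surj c
    exact ⟨i, mem_filter.2 ⟨mem_univ i, hi⟩⟩)

/-- The block with index `c` is incomplete at stage `m`, i.e. it meets the first `m`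
elements of `[n]` but is not contained in them. -/
def IncompleteAt (π : SetPartition n k) (m : ℕ) (c : Fin k) : Prop :=
  (∃ j : Fin n, (j : ℕ) < m ∧ π.w j = c) ∧ ∃ j : Fin n, m ≤ (j : ℕ) ∧ π.w j = c

instance (π : SetPartition n k) (m : ℕ) : DecidablePred (π.IncompleteAt m) := fun c =>
  inferInstanceAs (Decidable
    ((∃ j : Fin n, (j : ℕ) < m ∧ π.w j = c) ∧ ∃ j : Fin n, m ≤ (j : ℕ) ∧ π.w j = c))

/-- `l_i(π)`: the number of blocks incomplete at stage `i-1`; here the element `i` of `[n]`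
is represented by the index `i - 1 : Fin n`, so the first `i - 1` elements are those with
index `< i`. -/
def lTrace (π : SetPartition n k) (i : Fin n) : ℕ :=
  (univ.filter fun c => π.IncompleteAt (i : ℕ) c).card

/-- `γ_i(π)`: one plus the number of blocks incomplete at stage `i` lying to the left of the
block containing `i`. -/
def gammaTrace (π : SetPartition n k) (i : Fin n) : ℕ :=
  1 + (univ.filter fun c => π.IncompleteAt ((i : ℕ) + 1) c ∧ c < π.w i).card

end SetPartition

/-- The `q`-Stirling numbers of the second kind `S_q(n,k) ∈ ℤ[q]`, with
`S_q(n,k) = q^{k-1} S_q(n-1,k-1) + [k]_q S_q(n-1,k)`, `S_q(0,0) = 1`, and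
`S_q(n,k) = 0` when exactly one of `n,k` is zero (whence also for `k > n`). -/
noncomputable def qStirling : ℕ → ℕ → Polynomial ℤ
  | 0, 0 => 1
  | 0, _ + 1 => 0
  | _ + 1, 0 => 0
  | n + 1, k + 1 =>
      X ^ k * qStirling n k + (∑ i ∈ Finset.range (k + 1), X ^ i) * qStirling n (k + 1)

namespace SetPartition

variable {n k : ℕ}

@[ext] lemma ext' {π π' : SetPartition n k} (h : π.w = π'.w) : π = π' := by
  cases π; cases π'; simpa using h

lemma mem_openers {π : SetPartition n k} {i : Fin n} :
    i ∈ π.openers ↔ ∀ j, j < i → π.w j ≠ π.w i := by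
  simp [openers]

lemma mem_closers {π : SetPartition n k} {i : Fin n} :
    i ∈ π.closers ↔ ∀ j, i < j → π.w j ≠ π.w i := by
  simp [closers]

lemma w_blockMax (π : SetPartition n k) (c : Fin k) : π.w (π.blockMax c) = c := by
  have := Finset.max'_mem (univ.filter fun i => π.w i = c)
    (by obtain ⟨i, hi⟩ := π.surj c; exact ⟨i, mem_filter.2 ⟨mem_univ i, hi⟩⟩)
  simpa [blockMax] using (mem_filter.1 this).2

lemma le_blockMax (π : SetPartition n k) {c : Fin k} {i : Fin n} (h : π.w i = c) :
    i ≤ π.blockMax c :=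
  Finset.le_max' _ i (mem_filter.2 ⟨mem_univ i, h⟩)

lemma blockMax_eq_iff (π : SetPartition n k) {c : Fin k} {g : Fin n}
    (h1 : π.w g = c) (h2 : ∀ i, π.w i = c → i ≤ g) : π.blockMax c = g := by
  refine le_antisymm ?_ (π.le_blockMax h1)
  exact Finset.max'_le _ _ _ (fun y hy => h2 y (mem_filter.1 hy).2)

lemma blockMax_mem_closers (π : SetPartition n k) (c : Fin k) :
    π.blockMax c ∈ π.closers := by
  refine mem_closers.2 (fun j hj hw => ?_)
  have := π.le_blockMax (c := c) (by rw [hw, w_blockMax])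
  exact absurd this (not_le.2 hj)

lemma closer_eq_blockMax {π : SetPartition n k} {i : Fin n} (h : i ∈ π.closers) :
    π.blockMax (π.w i) = i := by
  refine π.blockMax_eq_iff rfl (fun j hj => ?_)
  by_contra hc
  exact (mem_closers.1 h) j (lt_of_not_ge hc) hj

/-- The map `c ↦ blockMax c` is a bijection from `Fin k` onto the closers. -/
lemma card_closers_filter (π : SetPartition n k) (p : Fin k → Prop) [DecidablePred p] :
    (π.closers.filter fun i => p (π.w i)).card = (univ.filter p).card := by
  refine Finset.card_bij (fun i _ => π.w i) ?_ ?_ ?_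
  · intro a ha; exact mem_filter.2 ⟨mem_univ _, (mem_filter.1 ha).2⟩
  · intro a ha b hb hab
    have ha' := closer_eq_blockMax (mem_filter.1 ha).1
    have hb' := closer_eq_blockMax (mem_filter.1 hb).1
    rw [← ha', ← hb', hab]
  · intro c hc
    exact ⟨π.blockMax c, mem_filter.2 ⟨π.blockMax_mem_closers c,
      by rw [w_blockMax]; exact (mem_filter.1 hc).2⟩, (w_blockMax π c)⟩

/-- Each block has a unique opener; openers biject with `Fin k`. -/
lemma exists_opener (π : SetPartition n k) (c : Fin k) :
    ∃ i ∈ π.openers, π.w i = c := by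
  classical
  have hne : (univ.filter fun i => π.w i = c).Nonempty := by
    obtain ⟨i, hi⟩ := π.surj c; exact ⟨i, mem_filter.2 ⟨mem_univ i, hi⟩⟩
  set m := (univ.filter fun i => π.w i = c).min' hne with hm
  have hmem := Finset.min'_mem _ hne
  have hwc : π.w m = c := (mem_filter.1 hmem).2
  refine ⟨m, mem_openers.2 (fun j hj hw => ?_), hwc⟩
  have : m ≤ j := Finset.min'_le _ j (mem_filter.2 ⟨mem_univ _, by rw [hw, hwc]⟩)
  exact absurd hj (not_lt.2 this)

lemma opener_unique {π : SetPartition n k} {i j : Fin n}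
    (hi : i ∈ π.openers) (hj : j ∈ π.openers) (h : π.w i = π.w j) : i = j := by
  rcases lt_trichotomy i j with hlt | he | hlt
  · exact absurd h (mem_openers.1 hj i hlt)
  · exact he
  · exact absurd h.symm (mem_openers.1 hi j hlt)

lemma card_openers_filter (π : SetPartition n k) (p : Fin k → Prop) [DecidablePred p] :
    (π.openers.filter fun i => p (π.w i)).card = (univ.filter p).card := by
  refine Finset.card_bij (fun i _ => π.w i) ?_ ?_ ?_
  · intro a ha; exact mem_filter.2 ⟨mem_univ _, (mem_filter.1 ha).2⟩
  · intro a ha b hb hab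
    exact opener_unique (mem_filter.1 ha).1 (mem_filter.1 hb).1 hab
  · intro c hc
    obtain ⟨i, hi, hw⟩ := π.exists_opener c
    exact ⟨i, mem_filter.2 ⟨hi, by rw [hw]; exact (mem_filter.1 hc).2⟩, hw⟩

end SetPartition
namespace SetPartition

variable {n k : ℕ}

/-- Append a letter `j` (an existing block) to a partition. -/
def extP (π : SetPartition n k) (j : Fin k) : SetPartition (n+1) k where
  w := Fin.snoc π.w j
  surj := by
    intro c
    obtain ⟨i, hi⟩ := π.surj c
    exact ⟨i.castSucc, by simpa using hi⟩
  rgf := by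
    intro i c hc
    revert hc
    refine Fin.lastCases ?_ ?_ i
    · intro hc'
      obtain ⟨i, hi⟩ := π.surj c
      exact ⟨i.castSucc, Fin.castSucc_lt_last i, by simpa using hi⟩
    · intro i hc'
      rw [Fin.snoc_castSucc] at hc'
      obtain ⟨j', hj', hw⟩ := π.rgf i c hc'
      exact ⟨j'.castSucc, by simpa using hj', by simpa using hw⟩

/-- Append a new block (the letter `k`, new largest) to a partition. -/
def nbP (π : SetPartition n k) : SetPartition (n+1) (k+1) where
  w := Fin.snoc (fun i => (π.w i).castSucc) (Fin.last k)
  surj := by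
    intro c
    refine Fin.lastCases ?_ ?_ c <;> clear c
    · exact ⟨Fin.last n, by simp⟩
    · intro c
      obtain ⟨i, hi⟩ := π.surj c
      exact ⟨i.castSucc, by simp [hi]⟩
  rgf := by
    intro i c hc
    revert hc
    refine Fin.lastCases ?_ ?_ i
    · intro hc'
      rw [Fin.snoc_last] at hc'
      have hne : c ≠ Fin.last k := ne_of_lt hc'
      obtain ⟨c', hc'eq⟩ := Fin.exists_castSucc_eq.2 hne
      obtain ⟨i, hi⟩ := π.surj c'
      exact ⟨i.castSucc, Fin.castSucc_lt_last i, by simp [hi, hc'eq]⟩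
    · intro i hc'
      rw [Fin.snoc_castSucc] at hc'
      have hne : c ≠ Fin.last k := ne_of_lt (lt_of_lt_of_le hc' (Fin.le_last _))
      obtain ⟨c', hc'eq⟩ := Fin.exists_castSucc_eq.2 hne
      subst hc'eq
      rw [Fin.castSucc_lt_castSucc_iff] at hc'
      obtain ⟨j', hj', hw⟩ := π.rgf i c' hc'
      exact ⟨j'.castSucc, by simpa using hj', by simp [hw]⟩

@[simp] lemma extP_w_castSucc (π : SetPartition n k) (j : Fin k) (i : Fin n) :
    (π.extP j).w i.castSucc = π.w i := by simp [extP]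

@[simp] lemma extP_w_last (π : SetPartition n k) (j : Fin k) :
    (π.extP j).w (Fin.last n) = j := by simp [extP]

@[simp] lemma nbP_w_castSucc (π : SetPartition n k) (i : Fin n) :
    π.nbP.w i.castSucc = (π.w i).castSucc := by simp [nbP]

@[simp] lemma nbP_w_last (π : SetPartition n k) :
    π.nbP.w (Fin.last n) = Fin.last k := by simp [nbP]

def csEmb : Fin n ↪ Fin (n+1) := ⟨Fin.castSucc, Fin.castSucc_injective n⟩

@[simp] lemma csEmb_apply (i : Fin n) : (csEmb i : Fin (n+1)) = i.castSucc := rfl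

lemma lt_castSucc_cases {i : Fin (n+1)} {i' : Fin n} (h : i < i'.castSucc) :
    ∃ i₀ : Fin n, i = i₀.castSucc ∧ i₀ < i' := by
  have hne : i ≠ Fin.last n := by
    intro he; subst he
    exact absurd h (not_lt.2 (Fin.le_last _))
  obtain ⟨i₀, hi₀⟩ := Fin.exists_castSucc_eq.2 hne
  exact ⟨i₀, hi₀.symm, by rwa [← hi₀, Fin.castSucc_lt_castSucc_iff] at h⟩

lemma openers_extP (π : SetPartition n k) (j : Fin k) :
    (π.extP j).openers = π.openers.map csEmb := by
  ext i
  simp only [Finset.mem_map, csEmb_apply]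
  constructor
  · intro hi
    have hi' := mem_openers.1 hi
    have hne : i ≠ Fin.last n := by
      intro he; subst he
      obtain ⟨a, ha⟩ := π.surj j
      exact hi' a.castSucc (Fin.castSucc_lt_last a) (by simp [ha])
    obtain ⟨i₀, hi₀⟩ := Fin.exists_castSucc_eq.2 hne
    refine ⟨i₀, mem_openers.2 (fun j' hj' hw => ?_), hi₀⟩
    refine hi' j'.castSucc (by rw [← hi₀] at *; simpa using hj') ?_
    rw [← hi₀]; simpa using hw
  · rintro ⟨i₀, hi₀, rfl⟩
    refine mem_openers.2 (fun j' hj' hw => ?_)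
    obtain ⟨j₀, rfl, hj₀⟩ := lt_castSucc_cases hj'
    simp only [extP_w_castSucc] at hw
    exact mem_openers.1 hi₀ j₀ hj₀ hw

lemma closers_extP (π : SetPartition n k) (j : Fin k) :
    (π.extP j).closers =
      insert (Fin.last n) ((π.closers.erase (π.blockMax j)).map csEmb) := by
  ext i
  simp only [Finset.mem_insert, Finset.mem_map, csEmb_apply, Finset.mem_erase]
  constructor
  · intro hi
    have hi' := mem_closers.1 hi
    by_cases hne : i = Fin.last n
    · exact Or.inl hne
    right
    obtain ⟨i₀, hi₀⟩ := Fin.exists_castSucc_eq.2 hne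
    refine ⟨i₀, ⟨?_, mem_closers.2 (fun j' hj' hw => ?_)⟩, hi₀⟩
    · intro he
      have hwj : π.w i₀ = j := by rw [he, w_blockMax]
      refine hi' (Fin.last n) (by rw [← hi₀]; exact Fin.castSucc_lt_last i₀) ?_
      rw [← hi₀]; simp [hwj]
    · refine hi' j'.castSucc ?_ ?_
      · rw [← hi₀]; simpa using hj'
      · rw [← hi₀]; simpa using hw
  · rintro (rfl | ⟨i₀, ⟨hne, hi₀⟩, rfl⟩)
    · refine mem_closers.2 (fun j' hj' _ => ?_)
      exact absurd hj' (not_lt.2 (Fin.le_last _))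
    · refine mem_closers.2 (fun j' => ?_)
      refine Fin.lastCases ?_ ?_ j'
      · intro _ hw
        simp only [extP_w_last, extP_w_castSucc] at hw
        exact hne (closer_eq_blockMax hi₀ ▸ by rw [hw])
      · intro j₀ hj' hw
        simp only [extP_w_castSucc] at hw
        rw [Fin.castSucc_lt_castSucc_iff] at hj'
        exact mem_closers.1 hi₀ j₀ hj' hw

lemma openers_nbP (π : SetPartition n k) :
    π.nbP.openers = insert (Fin.last n) (π.openers.map csEmb) := by
  ext i
  simp only [Finset.mem_insert, Finset.mem_map, csEmb_apply]
  constructor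
  · intro hi
    by_cases hne : i = Fin.last n
    · exact Or.inl hne
    right
    obtain ⟨i₀, hi₀⟩ := Fin.exists_castSucc_eq.2 hne
    refine ⟨i₀, mem_openers.2 (fun j' hj' hw => ?_), hi₀⟩
    refine mem_openers.1 hi j'.castSucc (by rw [← hi₀]; simpa using hj') ?_
    rw [← hi₀]; simp [hw]
  · rintro (rfl | ⟨i₀, hi₀, rfl⟩)
    · refine mem_openers.2 (fun j' hj' hw => ?_)
      obtain ⟨j₀, rfl⟩ := Fin.exists_castSucc_eq.2 (Fin.lt_last_iff_ne_last.1 hj')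
      simp only [nbP_w_castSucc, nbP_w_last] at hw
      exact absurd hw (Fin.castSucc_lt_last _).ne
    · refine mem_openers.2 (fun j' hj' hw => ?_)
      obtain ⟨j₀, rfl, hj₀⟩ := lt_castSucc_cases hj'
      simp only [nbP_w_castSucc, Fin.castSucc_inj] at hw
      exact mem_openers.1 hi₀ j₀ hj₀ hw

lemma closers_nbP (π : SetPartition n k) :
    π.nbP.closers = insert (Fin.last n) (π.closers.map csEmb) := by
  ext i
  simp only [Finset.mem_insert, Finset.mem_map, csEmb_apply]
  constructor
  · intro hi
    by_cases hne : i = Fin.last n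
    · exact Or.inl hne
    right
    obtain ⟨i₀, hi₀⟩ := Fin.exists_castSucc_eq.2 hne
    refine ⟨i₀, mem_closers.2 (fun j' hj' hw => ?_), hi₀⟩
    refine mem_closers.1 hi j'.castSucc ?_ ?_
    · rw [← hi₀]; simpa using hj'
    · rw [← hi₀]; simp [hw]
  · rintro (rfl | ⟨i₀, hi₀, rfl⟩)
    · refine mem_closers.2 (fun j' hj' _ => ?_)
      exact absurd hj' (not_lt.2 (Fin.le_last _))
    · refine mem_closers.2 (fun j' => ?_)
      refine Fin.lastCases ?_ ?_ j'
      · intro _ hw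
        simp only [nbP_w_last, nbP_w_castSucc] at hw
        exact absurd hw.symm (Fin.castSucc_lt_last _).ne
      · intro j₀ hj' hw
        simp only [nbP_w_castSucc, Fin.castSucc_inj] at hw
        rw [Fin.castSucc_lt_castSucc_iff] at hj'
        exact mem_closers.1 hi₀ j₀ hj' hw

end SetPartition
namespace SetPartition

variable {n k : ℕ}

/-- `N π c = nrinv(g(B_c), π)`. -/
def N (π : SetPartition n k) (c : Fin k) : ℕ := π.nrinv (π.blockMax c)

lemma card_filter_map_cs (s : Finset (Fin n)) (p : Fin (n+1) → Prop) [DecidablePred p] :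
    ((s.map csEmb).filter p).card = (s.filter fun i => p i.castSucc).card := by
  rw [Finset.filter_map, Finset.card_map]
  rfl

lemma card_erase_int {α : Type*} [DecidableEq α] (s : Finset α) (a : α) :
    (((s.erase a).card : ℤ)) = s.card - (if a ∈ s then 1 else 0) := by
  rw [Finset.card_erase_eq_ite]
  split_ifs with h
  · have : 1 ≤ s.card := Finset.card_pos.2 ⟨a, h⟩
    push_cast [Nat.cast_sub this]
    ring
  · simp

lemma card_filter_univ_succ (p : Fin (n+1) → Prop) [DecidablePred p] :
    (univ.filter p).card
      = ((univ : Finset (Fin n)).filter fun i => p i.castSucc).card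
        + (if p (Fin.last n) then 1 else 0) := by
  rw [Finset.card_filter, Finset.card_filter, Fin.sum_univ_castSucc]

lemma blockMax_extP_self (π : SetPartition n k) (j : Fin k) :
    (π.extP j).blockMax j = Fin.last n :=
  (π.extP j).blockMax_eq_iff (by simp) (fun i _ => Fin.le_last i)

lemma blockMax_extP_ne (π : SetPartition n k) {j c : Fin k} (h : c ≠ j) :
    (π.extP j).blockMax c = (π.blockMax c).castSucc := by
  refine (π.extP j).blockMax_eq_iff (by simp [w_blockMax]) ?_
  intro i
  refine Fin.lastCases ?_ ?_ i
  · intro hw; rw [extP_w_last] at hw; exact absurd hw.symm h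
  · intro i₀ hw
    rw [extP_w_castSucc] at hw
    exact Fin.castSucc_le_castSucc_iff.2 (π.le_blockMax hw)

lemma N_extP_self (π : SetPartition n k) (j : Fin k) : (π.extP j).N j = 0 := by
  rw [N, blockMax_extP_self, nrinv]
  rw [Finset.card_eq_zero, Finset.filter_eq_empty_iff]
  intro a _
  rw [not_and']
  intro _
  exact not_lt.2 (Fin.le_last a)

lemma N_extP_ne (π : SetPartition n k) {j c : Fin k} (h : c ≠ j) :
    (π.extP j).N c = π.N c + (if c < j then 1 else 0) := by
  rw [N, N, blockMax_extP_ne π h, nrinv, nrinv, card_filter_univ_succ]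
  congr 1
  · congr 1
    ext a
    simp [Fin.castSucc_lt_castSucc_iff, w_blockMax]
  · simp [Fin.castSucc_lt_last, w_blockMax]

lemma blockMax_nbP_last (π : SetPartition n k) :
    π.nbP.blockMax (Fin.last k) = Fin.last n :=
  π.nbP.blockMax_eq_iff (by simp) (fun i _ => Fin.le_last i)

lemma blockMax_nbP_castSucc (π : SetPartition n k) (c : Fin k) :
    π.nbP.blockMax c.castSucc = (π.blockMax c).castSucc := by
  refine π.nbP.blockMax_eq_iff (by simp [w_blockMax]) ?_
  intro i
  refine Fin.lastCases ?_ ?_ i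
  · intro hw
    rw [nbP_w_last] at hw
    exact absurd hw.symm (Fin.castSucc_lt_last c).ne
  · intro i₀ hw
    rw [nbP_w_castSucc, Fin.castSucc_inj] at hw
    exact Fin.castSucc_le_castSucc_iff.2 (π.le_blockMax hw)

lemma N_nbP_last (π : SetPartition n k) : π.nbP.N (Fin.last k) = 0 := by
  rw [N, blockMax_nbP_last, nrinv]
  rw [Finset.card_eq_zero, Finset.filter_eq_empty_iff]
  intro a _
  rw [not_and']
  intro _
  exact not_lt.2 (Fin.le_last a)

lemma N_nbP_castSucc (π : SetPartition n k) (c : Fin k) :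
    π.nbP.N c.castSucc = π.N c + 1 := by
  rw [N, N, blockMax_nbP_castSucc, nrinv, nrinv, card_filter_univ_succ]
  congr 1
  · congr 1
    ext a
    simp [Fin.castSucc_lt_castSucc_iff, w_blockMax]
  · simp [Fin.castSucc_lt_last, w_blockMax]

end SetPartition
namespace SetPartition

variable {n k : ℕ}

lemma card_closers (π : SetPartition n k) : π.closers.card = k := by
  have := π.card_closers_filter (fun _ => True)
  simpa using this

lemma filter_univ_lt (j : Fin k) :
    ((univ : Finset (Fin k)).filter fun c => c < j).card = (j : ℕ) := by
  have : (univ : Finset (Fin k)).filter (fun c => c < j) = Finset.Iio j := by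
    ext c; simp
  rw [this, Fin.card_Iio]

lemma filter_univ_gt (j : Fin k) :
    ((univ : Finset (Fin k)).filter fun c => j < c).card = k - 1 - (j : ℕ) := by
  have : (univ : Finset (Fin k)).filter (fun c => j < c) = Finset.Ioi j := by
    ext c; simp
  rw [this, Fin.card_Ioi]

lemma ros_extP (π : SetPartition n k) (j : Fin k) :
    (π.extP j).ros = π.ros + (k - 1 - (j : ℕ)) := by
  rw [ros, Fin.sum_univ_castSucc, ros]
  congr 1
  · refine Finset.sum_congr rfl (fun i _ => ?_)
    rw [openers_extP, card_filter_map_cs]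
    congr 1
    ext o
    simp [Fin.castSucc_lt_castSucc_iff]
  · rw [openers_extP, card_filter_map_cs]
    have : (π.openers.filter fun o =>
        o.castSucc < Fin.last n ∧ (π.extP j).w (Fin.last n) < (π.extP j).w o.castSucc)
        = π.openers.filter fun o => j < π.w o := by
      ext o
      simp [Fin.castSucc_lt_last]
    rw [this, π.card_openers_filter (fun c => j < c), filter_univ_gt]

lemma lcs_extP_int (π : SetPartition n k) (j : Fin k) :
    (((π.extP j).lcs : ℤ)) = π.lcs + (j : ℤ) - π.N j := by
  classical
  set g := π.blockMax j with hg
  have hwg : π.w g = j := π.w_blockMax j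
  have hNj : (π.N j : ℤ)
      = ∑ i : Fin n, (if g < i ∧ j < π.w i then (1:ℤ) else 0) := by
    rw [N, nrinv, Finset.card_filter, Nat.cast_sum, ← hg]
    refine Finset.sum_congr rfl (fun i _ => ?_)
    rw [hwg]
    split_ifs <;> simp
  have hterm : ∀ i' : Fin n,
      (((π.extP j).closers.filter fun o =>
        o < i'.castSucc ∧ (π.extP j).w o < (π.extP j).w i'.castSucc).card : ℤ)
      = ((π.closers.filter fun o => o < i' ∧ π.w o < π.w i').card : ℤ)
        - (if g < i' ∧ j < π.w i' then 1 else 0) := by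
    intro i'
    rw [closers_extP, Finset.filter_insert,
      if_neg (by simp [Fin.le_last, not_lt.2 (Fin.le_last i'.castSucc)]),
      card_filter_map_cs]
    have h1 : ((π.closers.erase g).filter fun o =>
        o.castSucc < i'.castSucc ∧ (π.extP j).w o.castSucc < (π.extP j).w i'.castSucc)
        = ((π.closers.filter fun o => o < i' ∧ π.w o < π.w i').erase g) := by
      rw [← Finset.filter_erase]
      ext o
      simp [Fin.castSucc_lt_castSucc_iff]
    rw [h1, card_erase_int]
    congr 1
    by_cases hc : g < i' ∧ j < π.w i'
    · rw [if_pos hc, if_pos]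
      exact Finset.mem_filter.2 ⟨π.blockMax_mem_closers j, hc.1, by rw [hwg]; exact hc.2⟩
    · rw [if_neg hc, if_neg]
      intro hmem
      obtain ⟨-, h2, h3⟩ := Finset.mem_filter.1 hmem
      exact hc ⟨h2, by rwa [hwg] at h3⟩
  have hlast : (((π.extP j).closers.filter fun o =>
      o < Fin.last n ∧ (π.extP j).w o < (π.extP j).w (Fin.last n)).card : ℤ) = (j : ℤ) := by
    rw [closers_extP, Finset.filter_insert, if_neg (by simp), card_filter_map_cs]
    have h1 : ((π.closers.erase g).filter fun o =>
        o.castSucc < Fin.last n ∧ (π.extP j).w o.castSucc < (π.extP j).w (Fin.last n))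
        = ((π.closers.filter fun o => π.w o < j).erase g) := by
      rw [← Finset.filter_erase]
      ext o
      simp [Fin.castSucc_lt_last]
    rw [h1, Finset.erase_eq_of_notMem, π.card_closers_filter (fun c => c < j),
      filter_univ_lt]
    intro hmem
    exact absurd (Finset.mem_filter.1 hmem).2 (by simp [hwg])
  rw [lcs, Fin.sum_univ_castSucc, Nat.cast_add, Nat.cast_sum]
  rw [Finset.sum_congr rfl (fun i _ => hterm i), Finset.sum_sub_distrib, hlast,
    lcs, Nat.cast_sum, hNj]
  ring

lemma mak_extP_int (π : SetPartition n k) (j : Fin k) :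
    (((π.extP j).mak : ℤ)) = π.mak + (k : ℤ) - 1 - π.N j := by
  have hj : (j : ℕ) < k := j.isLt
  have h1 : ((k - 1 - (j : ℕ) : ℕ) : ℤ) = (k : ℤ) - 1 - (j : ℤ) := by omega
  rw [mak, Nat.cast_add, ros_extP, lcs_extP_int, Nat.cast_add, h1, mak, Nat.cast_add]
  ring

lemma ros_nbP (π : SetPartition n k) : π.nbP.ros = π.ros := by
  rw [ros, Fin.sum_univ_castSucc, ros]
  have hlast : (π.nbP.openers.filter fun o =>
      o < Fin.last n ∧ π.nbP.w (Fin.last n) < π.nbP.w o).card = 0 := by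
    rw [Finset.card_eq_zero, Finset.filter_eq_empty_iff]
    rintro o - ⟨-, h2⟩
    rw [nbP_w_last] at h2
    exact absurd h2 (not_lt.2 (Fin.le_last _))
  rw [hlast, add_zero]
  refine Finset.sum_congr rfl (fun i _ => ?_)
  rw [openers_nbP, Finset.filter_insert, if_neg (by simp [not_lt.2 (Fin.le_last i.castSucc)]),
    card_filter_map_cs]
  congr 1
  ext o
  simp [Fin.castSucc_lt_castSucc_iff]

lemma lcs_nbP (π : SetPartition n k) : π.nbP.lcs = π.lcs + k := by
  rw [lcs, Fin.sum_univ_castSucc, lcs]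
  congr 1
  · refine Finset.sum_congr rfl (fun i _ => ?_)
    rw [closers_nbP, Finset.filter_insert, if_neg (by simp [not_lt.2 (Fin.le_last i.castSucc)]),
      card_filter_map_cs]
    congr 1
    ext o
    simp [Fin.castSucc_lt_castSucc_iff]
  · rw [closers_nbP, Finset.filter_insert, if_neg (by simp), card_filter_map_cs]
    have : (π.closers.filter fun o =>
        o.castSucc < Fin.last n ∧ π.nbP.w o.castSucc < π.nbP.w (Fin.last n)) = π.closers := by
      refine Finset.filter_true_of_mem (fun o _ => ?_)
      refine ⟨Fin.castSucc_lt_last o, ?_⟩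
      rw [nbP_w_castSucc, nbP_w_last]
      exact Fin.castSucc_lt_last _
    rw [this, card_closers]

lemma mak_nbP (π : SetPartition n k) : π.nbP.mak = π.mak + k := by
  rw [mak, ros_nbP, lcs_nbP, mak]
  omega

end SetPartition
namespace SetPartition

variable {n k : ℕ}

/-- The structure map realizing `P(n+1,k+1) ≃ P(n,k+1) × [k+1] ⊕ P(n,k)`. -/
def buildF : (SetPartition n (k+1) × Fin (k+1)) ⊕ SetPartition n k →
    SetPartition (n+1) (k+1)
  | Sum.inl (π, j) => π.extP j
  | Sum.inr π => π.nbP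

lemma extP_ne_nbP (π : SetPartition n (k+1)) (j : Fin (k+1)) (τ : SetPartition n k) :
    π.extP j ≠ τ.nbP := by
  intro h
  obtain ⟨i, hi⟩ := π.surj j
  have h1 : (π.extP j).w i.castSucc = (π.extP j).w (Fin.last n) := by
    rw [extP_w_castSucc, extP_w_last, hi]
  rw [h] at h1
  rw [nbP_w_castSucc, nbP_w_last] at h1
  exact (Fin.castSucc_lt_last _).ne h1

lemma buildF_bijective : Function.Bijective (buildF : _ → SetPartition (n+1) (k+1)) := by
  constructor
  · rintro (⟨π, j⟩ | π) (⟨π', j'⟩ | π') h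
    · simp only [buildF] at h
      have hw := congrArg SetPartition.w h
      have hj : j = j' := by
        have := congrFun hw (Fin.last n)
        simpa using this
      have hπ : π = π' := by
        refine ext' (funext fun i => ?_)
        have := congrFun hw i.castSucc
        simpa using this
      rw [hj, hπ]
    · exact absurd h (extP_ne_nbP _ _ _)
    · exact absurd h.symm (extP_ne_nbP _ _ _)
    · simp only [buildF] at h
      have hw := congrArg SetPartition.w h
      have hπ : π = π' := by
        refine ext' (funext fun i => ?_)
        have := congrFun hw i.castSucc
        rw [nbP_w_castSucc, nbP_w_castSucc, Fin.castSucc_inj] at this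
        exact this
      rw [hπ]
  · intro ρ
    by_cases hex : ∃ i : Fin n, ρ.w i.castSucc = ρ.w (Fin.last n)
    · refine ⟨Sum.inl (⟨⟨fun i => ρ.w i.castSucc, ?_, ?_⟩, ρ.w (Fin.last n)⟩), ?_⟩
      · intro c
        obtain ⟨a, ha⟩ := ρ.surj c
        revert ha
        refine Fin.lastCases ?_ ?_ a
        · intro ha
          obtain ⟨i, hi⟩ := hex
          exact ⟨i, by show ρ.w i.castSucc = c; rw [hi, ha]⟩
        · intro a₀ ha
          exact ⟨a₀, ha⟩
      · intro i c hc
        obtain ⟨j', hj', hw⟩ := ρ.rgf i.castSucc c hc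
        obtain ⟨j₀, rfl, hj₀⟩ := lt_castSucc_cases hj'
        exact ⟨j₀, hj₀, hw⟩
      · refine ext' (funext fun i => ?_)
        refine Fin.lastCases ?_ ?_ i
        · simp [buildF]
        · intro i₀
          simp [buildF]
    · have hlast : ρ.w (Fin.last n) = Fin.last k := by
        by_contra hne
        have hlt : ρ.w (Fin.last n) < Fin.last k := Fin.lt_last_iff_ne_last.2 hne
        obtain ⟨a, ha⟩ := ρ.surj (Fin.last k)
        have hane : a ≠ Fin.last n := by
          intro he
          exact hne (he ▸ ha)
        obtain ⟨a₀, ha₀⟩ := Fin.exists_castSucc_eq.2 hane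
        have hlt' : ρ.w (Fin.last n) < ρ.w a := by rw [ha]; exact hlt
        obtain ⟨j', hj', hw⟩ := ρ.rgf a (ρ.w (Fin.last n)) hlt'
        have hj'lt : j' < (Fin.last n : Fin (n+1)) := by
          calc j' < a := hj'
          _ = a₀.castSucc := ha₀.symm
          _ < Fin.last n := Fin.castSucc_lt_last a₀
        obtain ⟨j₀, hj₀⟩ := Fin.exists_castSucc_eq.2 (Fin.lt_last_iff_ne_last.1 hj'lt)
        exact hex ⟨j₀, by rw [hj₀, hw]⟩
      have hcs : ∀ i : Fin n, ρ.w i.castSucc ≠ Fin.last k := by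
        intro i hi
        exact hex ⟨i, by rw [hi, hlast]⟩
      refine ⟨Sum.inr ⟨fun i => (ρ.w i.castSucc).castPred (hcs i), ?_, ?_⟩, ?_⟩
      · intro c
        obtain ⟨a, ha⟩ := ρ.surj c.castSucc
        have hane : a ≠ Fin.last n := by
          intro he
          rw [he, hlast] at ha
          exact (Fin.castSucc_lt_last c).ne ha.symm
        obtain ⟨a₀, ha₀⟩ := Fin.exists_castSucc_eq.2 hane
        refine ⟨a₀, ?_⟩
        apply Fin.castSucc_injective
        rw [Fin.castSucc_castPred, ha₀, ha]
      · intro i c hc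
        have hc' : c.castSucc < ρ.w i.castSucc := by
          have := Fin.castSucc_lt_castSucc_iff.2 hc
          rwa [Fin.castSucc_castPred] at this
        obtain ⟨j', hj', hw⟩ := ρ.rgf i.castSucc c.castSucc hc'
        obtain ⟨j₀, rfl, hj₀⟩ := lt_castSucc_cases hj'
        refine ⟨j₀, hj₀, ?_⟩
        apply Fin.castSucc_injective
        rw [Fin.castSucc_castPred, hw]
      · refine ext' (funext fun i => ?_)
        refine Fin.lastCases ?_ ?_ i
        · simp [buildF, hlast]
        · intro i₀
          simp [buildF, Fin.castSucc_castPred]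

lemma sum_succ_decomp {M : Type*} [AddCommMonoid M]
    (g : SetPartition (n+1) (k+1) → M) :
    ∑ π : SetPartition (n+1) (k+1), g π
      = (∑ π : SetPartition n (k+1), ∑ j : Fin (k+1), g (π.extP j))
        + ∑ π : SetPartition n k, g (π.nbP) := by
  rw [← buildF_bijective.sum_comp g, Fintype.sum_sum_type]
  congr 1
  rw [Fintype.sum_prod_type]
  rfl

end SetPartition
namespace SetPartition

variable {k : ℕ}

/-- `sig A = Σ_{l ∈ A} (k-1-l)` (0-indexed version of `Σ_l (k-l)`). -/
def sig {K : ℕ} (A : Finset (Fin K)) : ℕ := ∑ l ∈ A, (K - 1 - (l : ℕ))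

section Key

variable (A : Finset (Fin (k+1)))

/-- `cnt A j = #{x ∈ A : x < j}`. -/
def cnt (j : Fin (k+1)) : ℕ := (A.filter fun x => x < j).card

/-- The exponent function in the key identity. -/
def fexp (j : Fin (k+1)) : ℕ :=
  if j ∈ A then k - cnt A j else (j : ℕ) - cnt A j

lemma cnt_le (j : Fin (k+1)) : cnt A j ≤ (j : ℕ) := by
  have h : (A.filter fun x => x < j).card
      ≤ ((univ : Finset (Fin (k+1))).filter fun x => x < j).card :=
    Finset.card_le_card (Finset.filter_subset_filter _ (Finset.subset_univ A))
  rwa [filter_univ_lt] at h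

lemma cnt_mono {a b : Fin (k+1)} (h : a ≤ b) : cnt A a ≤ cnt A b := by
  refine Finset.card_le_card (fun x hx => ?_)
  obtain ⟨hxA, hxa⟩ := Finset.mem_filter.1 hx
  exact Finset.mem_filter.2 ⟨hxA, lt_of_lt_of_le hxa h⟩

lemma cnt_strict {a b : Fin (k+1)} (h : a < b) (ha : a ∈ A) :
    cnt A a + 1 ≤ cnt A b := by
  have hsub : A.filter (fun x => x < a) ⊆ A.filter (fun x => x < b) := by
    refine fun x hx => ?_
    obtain ⟨hxA, hxa⟩ := Finset.mem_filter.1 hx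
    exact Finset.mem_filter.2 ⟨hxA, lt_trans hxa h⟩
  have hlt : (A.filter fun x => x < a).card < (A.filter fun x => x < b).card := by
    refine Finset.card_lt_card ?_
    rw [Finset.ssubset_iff_of_subset hsub]
    exact ⟨a, Finset.mem_filter.2 ⟨ha, h⟩, fun hmem => lt_irrefl a (Finset.mem_filter.1 hmem).2⟩
  exact hlt

lemma cnt_gap {a b : Fin (k+1)} (h : a < b) (ha : a ∉ A) :
    cnt A b ≤ cnt A a + ((b : ℕ) - (a : ℕ) - 1) := by
  have hsub : A.filter (fun x => x < a) ⊆ A.filter (fun x => x < b) := by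
    refine fun x hx => ?_
    obtain ⟨hxA, hxa⟩ := Finset.mem_filter.1 hx
    exact Finset.mem_filter.2 ⟨hxA, lt_trans hxa h⟩
  have hdiff : (A.filter (fun x => x < b)) \ (A.filter (fun x => x < a))
      ⊆ Finset.Ioo a b := by
    intro x hx
    obtain ⟨hx1, hx2⟩ := Finset.mem_sdiff.1 hx
    obtain ⟨hxA, hxb⟩ := Finset.mem_filter.1 hx1
    have hax : a ≤ x := by
      by_contra hc
      exact hx2 (Finset.mem_filter.2 ⟨hxA, lt_of_not_ge hc⟩)
    have hax' : a < x := lt_of_le_of_ne hax (fun he => ha (he ▸ hxA))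
    exact Finset.mem_Ioo.2 ⟨hax', hxb⟩
  have hcard := Finset.card_sdiff_add_card_eq_card hsub
  have hIoo : (Finset.Ioo a b).card = (b : ℕ) - (a : ℕ) - 1 := by
    rw [Fin.card_Ioo]
  have := Finset.card_le_card hdiff
  rw [hIoo] at this
  unfold cnt
  omega

lemma cnt_lt_cardA {b : Fin (k+1)} (hb : b ∈ A) : cnt A b + 1 ≤ A.card := by
  have hsub : A.filter (fun x => x < b) ⊆ A.erase b := by
    intro x hx
    obtain ⟨hxA, hxb⟩ := Finset.mem_filter.1 hx
    exact Finset.mem_erase.2 ⟨ne_of_lt hxb, hxA⟩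
  have h1 := Finset.card_le_card hsub
  rw [Finset.card_erase_of_mem hb] at h1
  have h2 : 1 ≤ A.card := Finset.card_pos.2 ⟨b, hb⟩
  unfold cnt
  omega

lemma cardA_bound {a : Fin (k+1)} (ha : a ∉ A) :
    (a : ℕ) - cnt A a + A.card ≤ k := by
  classical
  have hsplit : cnt A a + (A.filter fun x => ¬ x < a).card = A.card := by
    unfold cnt
    rw [Finset.card_filter_add_card_filter_not]
  have hsub : (A.filter fun x => ¬ x < a) ⊆ (univ : Finset (Fin (k+1))).filter
      (fun x => a < x) := by
    intro x hx
    obtain ⟨hxA, hxa⟩ := Finset.mem_filter.1 hx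
    have : a ≤ x := not_lt.1 hxa
    have hne : a ≠ x := fun he => ha (he ▸ hxA)
    exact Finset.mem_filter.2 ⟨Finset.mem_univ x, lt_of_le_of_ne this hne⟩
  have h2 := Finset.card_le_card hsub
  rw [filter_univ_gt] at h2
  have h3 : (a : ℕ) ≤ k := Nat.lt_succ_iff.1 a.isLt
  have h4 := cnt_le A a
  omega

lemma fexp_le (j : Fin (k+1)) : fexp A j ≤ k := by
  unfold fexp
  have h1 := cnt_le A j
  have h2 : (j : ℕ) ≤ k := Nat.lt_succ_iff.1 j.isLt
  split_ifs <;> omega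

lemma fexp_injective : Function.Injective (fexp A) := by
  have key : ∀ a b : Fin (k+1), a < b → fexp A a ≠ fexp A b := by
    intro a b hab
    have hval : (a : ℕ) < (b : ℕ) := hab
    have hbk : (b : ℕ) ≤ k := Nat.lt_succ_iff.1 b.isLt
    have ha' := cnt_le A a
    have hb' := cnt_le A b
    by_cases ha : a ∈ A <;> by_cases hb : b ∈ A
    · -- both in A : fexp b < fexp a
      have := cnt_strict A hab ha
      unfold fexp
      rw [if_pos ha, if_pos hb]
      omega
    · -- a ∈ A, b ∉ A : fexp b ≤ k - A.card < fexp a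
      have h1 := cardA_bound A hb
      have h2 := cnt_lt_cardA A ha
      unfold fexp
      rw [if_pos ha, if_neg hb]
      omega
    · -- a ∉ A, b ∈ A
      have h1 := cardA_bound A ha
      have h2 := cnt_lt_cardA A hb
      unfold fexp
      rw [if_neg ha, if_pos hb]
      omega
    · -- both out : fexp a < fexp b
      have := cnt_gap A hab ha
      unfold fexp
      rw [if_neg ha, if_neg hb]
      omega
  intro a b h
  rcases lt_trichotomy a b with hlt | he | hlt
  · exact absurd h (key a b hlt)
  · exact he
  · exact absurd h.symm (key b a hlt)

lemma sum_fexp_pow (q : ℝ) :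
    ∑ j : Fin (k+1), q ^ ((fexp A j : ℤ))
      = ∑ t ∈ Finset.range (k+1), q ^ ((t : ℤ)) := by
  have hbij : Function.Bijective (fun j => (⟨fexp A j, Nat.lt_succ_iff.2 (fexp_le A j)⟩ :
      Fin (k+1))) := by
    refine Finite.injective_iff_bijective.1 (fun a b h => ?_)
    exact fexp_injective A (by simpa using congrArg Fin.val h)
  have := hbij.sum_comp (fun t : Fin (k+1) => q ^ ((t : ℕ) : ℤ))
  rw [Fin.sum_univ_eq_sum_range (fun t : ℕ => q ^ ((t : ℕ) : ℤ))] at this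
  exact this

/-- The key exponent identity. -/
lemma key_identity (q : ℝ) (hq : q ≠ 0) :
    ∑ j : Fin (k+1), q ^ ((k : ℤ) - (cnt A j : ℤ) - (sig (insert j A) : ℤ) + (sig A : ℤ))
      = ∑ t ∈ Finset.range (k+1), q ^ ((t : ℤ)) := by
  rw [← sum_fexp_pow A q]
  refine Finset.sum_congr rfl (fun j _ => ?_)
  congr 1
  have h1 := cnt_le A j
  have h2 : (j : ℕ) ≤ k := Nat.lt_succ_iff.1 j.isLt
  by_cases hj : j ∈ A
  · rw [Finset.insert_eq_self.2 hj]
    unfold fexp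
    rw [if_pos hj]
    omega
  · have : sig (insert j A) = (k - (j : ℕ)) + sig A := by
      unfold sig
      rw [Finset.sum_insert hj]
      congr 1
    rw [this]
    unfold fexp
    rw [if_neg hj]
    omega
end Key

end SetPartition
lemma qStirling_zero_zero : qStirling 0 0 = 1 := rfl
lemma qStirling_zero_succ (k : ℕ) : qStirling 0 (k+1) = 0 := rfl
lemma qStirling_succ_zero (n : ℕ) : qStirling (n+1) 0 = 0 := rfl
lemma qStirling_succ_succ (n k : ℕ) :
    qStirling (n+1) (k+1)
      = X ^ k * qStirling n k + (∑ i ∈ Finset.range (k + 1), X ^ i) * qStirling n (k + 1) :=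
  rfl

lemma aeval_qStirling_succ_succ (n k : ℕ) (q : ℝ) :
    Polynomial.aeval q (qStirling (n+1) (k+1))
      = q ^ k * Polynomial.aeval q (qStirling n k)
        + (∑ i ∈ Finset.range (k + 1), q ^ i) * Polynomial.aeval q (qStirling n (k+1)) := by
  rw [qStirling_succ_succ, map_add, map_mul, map_mul, map_pow, aeval_X, map_sum]
  congr 2
  refine Finset.sum_congr rfl (fun i _ => ?_)
  rw [map_pow, aeval_X]

namespace SetPartition

instance : Unique (SetPartition 0 0) where
  default := ⟨Fin.elim0, fun c => c.elim0, fun i => i.elim0⟩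
  uniq := fun π => ext' (funext fun i => i.elim0)

instance (k : ℕ) : IsEmpty (SetPartition 0 (k+1)) := by
  refine ⟨fun π => ?_⟩
  obtain ⟨i, _⟩ := π.surj 0
  exact i.elim0

instance (n : ℕ) : IsEmpty (SetPartition (n+1) 0) :=
  ⟨fun π => (π.w 0).elim0⟩

lemma mak_zero (π : SetPartition 0 0) : π.mak = 0 := by
  simp [mak, ros, lcs]

/-- Change of `Σ_{l ∈ A} N_l` under appending letter `j`. -/
lemma sum_N_extP_int {n k : ℕ} (π : SetPartition n k) (j : Fin k) (A : Finset (Fin k)) :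
    ∑ l ∈ A, ((π.extP j).N l : ℤ)
      = (∑ l ∈ insert j A, (π.N l : ℤ)) - π.N j + ((A.filter fun x => x < j).card : ℤ) := by
  classical
  have hsum : ∑ l ∈ A, ((π.extP j).N l : ℤ)
      = ∑ l ∈ A.erase j, ((π.N l : ℤ) + if l < j then 1 else 0) := by
    rw [← Finset.sum_erase (s := A)
      (f := fun l => ((π.extP j).N l : ℤ))
      (by show ((π.extP j).N j : ℤ) = 0; rw [N_extP_self]; simp)]
    refine Finset.sum_congr rfl (fun l hl => ?_)
    have hlj : l ≠ j := (Finset.mem_erase.1 hl).1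
    rw [π.N_extP_ne hlj]
    push_cast
    split_ifs <;> simp
  rw [hsum, Finset.sum_add_distrib]
  have h1 : ∑ l ∈ A.erase j, (π.N l : ℤ) = (∑ l ∈ insert j A, (π.N l : ℤ)) - π.N j := by
    rw [← Finset.erase_insert_eq_erase,
      Finset.sum_erase_eq_sub (Finset.mem_insert_self j A)]
  have h2 : (∑ l ∈ A.erase j, if l < j then (1:ℤ) else 0)
      = ((A.filter fun x => x < j).card : ℤ) := by
    rw [Finset.sum_boole, Finset.filter_erase, Finset.erase_eq_of_notMem]
    simp
  rw [h1, h2]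

/-- Change of `Σ_{l ∈ A} N_l` under opening a new block. -/
lemma sum_N_nbP_int {n k : ℕ} (π : SetPartition n k) (A : Finset (Fin (k+1))) :
    ∑ l ∈ A, ((π.nbP).N l : ℤ)
      = (∑ l' ∈ (univ.filter fun l' : Fin k => l'.castSucc ∈ A), (π.N l' : ℤ))
        + ((univ.filter fun l' : Fin k => l'.castSucc ∈ A).card : ℤ) := by
  classical
  have herase : A.erase (Fin.last k)
      = (univ.filter fun l' : Fin k => l'.castSucc ∈ A).map csEmb := by
    ext x
    simp only [Finset.mem_erase, Finset.mem_map, Finset.mem_filter, Finset.mem_univ,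
      true_and, csEmb_apply]
    constructor
    · rintro ⟨hne, hx⟩
      obtain ⟨x₀, hx₀⟩ := Fin.exists_castSucc_eq.2 hne
      exact ⟨x₀, by rwa [hx₀], hx₀⟩
    · rintro ⟨x₀, hx₀, rfl⟩
      exact ⟨(Fin.castSucc_lt_last x₀).ne, hx₀⟩
  have h0 : ∑ l ∈ A, ((π.nbP).N l : ℤ) = ∑ l ∈ A.erase (Fin.last k), ((π.nbP).N l : ℤ) := by
    rw [Finset.sum_erase (s := A) (f := fun l => ((π.nbP).N l : ℤ))
      (by show ((π.nbP).N (Fin.last k) : ℤ) = 0; rw [N_nbP_last]; simp)]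
  rw [h0, herase, Finset.sum_map]
  have hterm : ∀ l' ∈ (univ.filter fun l' : Fin k => l'.castSucc ∈ A),
      ((π.nbP).N (csEmb l') : ℤ) = (π.N l' : ℤ) + 1 := by
    intro l' _
    show ((π.nbP).N l'.castSucc : ℤ) = _
    rw [π.N_nbP_castSucc]
    push_cast
    ring
  rw [Finset.sum_congr rfl hterm, Finset.sum_add_distrib]
  simp

lemma sig_singleton {K : ℕ} (l : Fin K) : sig ({l} : Finset (Fin K)) = K - 1 - (l : ℕ) := by
  simp [sig]

lemma sig_nbP_rel {k : ℕ} (A : Finset (Fin (k+1))) :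
    sig A = sig (univ.filter fun l' : Fin k => l'.castSucc ∈ A)
      + (univ.filter fun l' : Fin k => l'.castSucc ∈ A).card := by
  classical
  have herase : A.erase (Fin.last k)
      = (univ.filter fun l' : Fin k => l'.castSucc ∈ A).map csEmb := by
    ext x
    simp only [Finset.mem_erase, Finset.mem_map, Finset.mem_filter, Finset.mem_univ,
      true_and, csEmb_apply]
    constructor
    · rintro ⟨hne, hx⟩
      obtain ⟨x₀, hx₀⟩ := Fin.exists_castSucc_eq.2 hne
      exact ⟨x₀, by rwa [hx₀], hx₀⟩
    · rintro ⟨x₀, hx₀, rfl⟩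
      exact ⟨(Fin.castSucc_lt_last x₀).ne, hx₀⟩
  have h0 : sig A = ∑ l ∈ A.erase (Fin.last k), (k + 1 - 1 - (l : ℕ)) := by
    rw [sig, Finset.sum_erase (s := A) (f := fun l : Fin (k+1) => (k + 1 - 1 - (l : ℕ)))
      (by simp)]
  rw [h0, herase, Finset.sum_map, sig, Finset.card_eq_sum_ones, ← Finset.sum_add_distrib]
  refine Finset.sum_congr rfl (fun l' _ => ?_)
  show k + 1 - 1 - ((csEmb l' : Fin (k+1)) : ℕ) = _
  rw [csEmb_apply, Fin.coe_castSucc]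
  have hl := l'.isLt
  omega

end SetPartition
namespace SetPartition

lemma main_sum (q : ℝ) (hq : q ≠ 0) :
    ∀ (n k : ℕ) (A : Finset (Fin k)),
      ∑ π : SetPartition n k, q ^ ((π.mak : ℤ) - ∑ l ∈ A, (π.N l : ℤ))
        = q ^ (-(sig A : ℤ)) * Polynomial.aeval q (qStirling n k) := by
  intro n
  induction n with
  | zero =>
    intro k A
    cases k with
    | zero =>
      have hA : A = ∅ := Finset.eq_empty_of_isEmpty A
      subst hA
      rw [Fintype.sum_unique (fun π : SetPartition 0 0 =>
        q ^ ((π.mak : ℤ) - ∑ l ∈ (∅ : Finset (Fin 0)), (π.N l : ℤ)))]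
      rw [mak_zero, qStirling_zero_zero, map_one]
      simp [sig]
    | succ k =>
      rw [Finset.univ_eq_empty, Finset.sum_empty, qStirling_zero_succ, map_zero, mul_zero]
  | succ n ih =>
    intro k A
    cases k with
    | zero =>
      rw [Finset.univ_eq_empty, Finset.sum_empty, qStirling_succ_zero, map_zero, mul_zero]
    | succ k =>
      rw [sum_succ_decomp (g := fun π : SetPartition (n+1) (k+1) =>
        q ^ ((π.mak : ℤ) - ∑ l ∈ A, (π.N l : ℤ)))]
      have hb1 : ∀ (π : SetPartition n (k+1)) (j : Fin (k+1)),
          q ^ ((((π.extP j).mak : ℤ)) - ∑ l ∈ A, (((π.extP j).N l : ℤ)))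
            = q ^ ((π.mak : ℤ) - ∑ l ∈ insert j A, (π.N l : ℤ))
              * q ^ ((k : ℤ) - (cnt A j : ℤ)) := by
        intro π j
        rw [mak_extP_int, sum_N_extP_int, ← zpow_add₀ hq]
        congr 1
        show _ = _ + ((k : ℤ) - ((A.filter fun x => x < j).card : ℤ))
        push_cast
        ring
      have hbranch1 : ∑ π : SetPartition n (k+1), ∑ j : Fin (k+1),
            q ^ ((((π.extP j).mak : ℤ)) - ∑ l ∈ A, (((π.extP j).N l : ℤ)))
          = (∑ j : Fin (k+1), q ^ ((k : ℤ) - (cnt A j : ℤ) - (sig (insert j A) : ℤ)))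
              * Polynomial.aeval q (qStirling n (k+1)) := by
        rw [Finset.sum_comm, Finset.sum_mul]
        refine Finset.sum_congr rfl (fun j _ => ?_)
        rw [Finset.sum_congr rfl (fun π _ => hb1 π j), ← Finset.sum_mul,
          ih (k+1) (insert j A)]
        rw [mul_comm (q ^ (-(sig (insert j A) : ℤ)) * Polynomial.aeval q (qStirling n (k+1)))
          (q ^ ((k : ℤ) - (cnt A j : ℤ)))]
        rw [← mul_assoc, ← zpow_add₀ hq]
        congr 2
      have hkey : ∑ j : Fin (k+1), q ^ ((k : ℤ) - (cnt A j : ℤ) - (sig (insert j A) : ℤ))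
          = q ^ (-(sig A : ℤ)) * ∑ t ∈ Finset.range (k+1), q ^ (t : ℕ) := by
        have hk := key_identity A q hq
        have hstep : ∀ j : Fin (k+1),
            q ^ ((k : ℤ) - (cnt A j : ℤ) - (sig (insert j A) : ℤ))
              = q ^ (-(sig A : ℤ))
                * q ^ ((k : ℤ) - (cnt A j : ℤ) - (sig (insert j A) : ℤ) + (sig A : ℤ)) := by
          intro j
          rw [← zpow_add₀ hq]
          congr 1
          ring
        rw [Finset.sum_congr rfl (fun j _ => hstep j), ← Finset.mul_sum, hk]
        congr 1
      have hb2 : ∀ π : SetPartition n k,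
          q ^ (((π.nbP.mak : ℤ)) - ∑ l ∈ A, ((π.nbP.N l : ℤ)))
            = q ^ ((π.mak : ℤ)
                - ∑ l' ∈ (univ.filter fun l' : Fin k => l'.castSucc ∈ A), (π.N l' : ℤ))
              * q ^ ((k : ℤ)
                - ((univ.filter fun l' : Fin k => l'.castSucc ∈ A).card : ℤ)) := by
        intro π
        rw [sum_N_nbP_int, ← zpow_add₀ hq, mak_nbP]
        congr 1
        push_cast
        ring
      have hbranch2 : ∑ π : SetPartition n k,
            q ^ (((π.nbP.mak : ℤ)) - ∑ l ∈ A, ((π.nbP.N l : ℤ)))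
          = q ^ (-(sig A : ℤ)) * (q ^ k * Polynomial.aeval q (qStirling n k)) := by
        rw [Finset.sum_congr rfl (fun π _ => hb2 π), ← Finset.sum_mul,
          ih k (univ.filter fun l' : Fin k => l'.castSucc ∈ A)]
        rw [mul_comm, ← mul_assoc, ← mul_assoc, ← zpow_natCast q k, ← zpow_add₀ hq,
          ← zpow_add₀ hq]
        congr 2
        have := sig_nbP_rel A
        push_cast [this]
        ring
      rw [hbranch1, hbranch2, hkey, aeval_qStirling_succ_succ]
      ring

end SetPartition

/-- For all integers `n ≥ k ≥ 1` and every `l` with `1 ≤ l ≤ k`, the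
generating function of the statistic `mak_l(π) = mak(π) - nrinv(g(B_l),π) + k - l` over
`P(n,k)` equals the `q`-Stirling number `S_q(n,k)`, for every real `q > 0`. -/
theorem makl_generating_function (n k : ℕ) (hk : 1 ≤ k) (hkn : k ≤ n)
    (l : ℕ) (hl : 1 ≤ l) (hlk : l ≤ k) (q : ℝ) (hq : 0 < q) :
    ∑ π : SetPartition n k,
        q ^ ((π.mak : ℤ) - (π.nrinv (π.blockMax ⟨l - 1, by omega⟩) : ℤ) + (k : ℤ) - (l : ℤ))
      = Polynomial.aeval q (qStirling n k) := by
  have hq' : q ≠ 0 := ne_of_gt hq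
  set l0 : Fin k := ⟨l - 1, by omega⟩ with hl0
  have hmain := SetPartition.main_sum q hq' n k ({l0} : Finset (Fin k))
  have hexp : ∀ π : SetPartition n k,
      q ^ ((π.mak : ℤ) - (π.nrinv (π.blockMax l0) : ℤ) + (k : ℤ) - (l : ℤ))
        = q ^ ((π.mak : ℤ) - ∑ x ∈ ({l0} : Finset (Fin k)), (π.N x : ℤ))
          * q ^ ((k : ℤ) - (l : ℤ)) := by
    intro π
    rw [← zpow_add₀ hq', Finset.sum_singleton]
    congr 1
    show _ = (π.mak : ℤ) - (π.N l0 : ℤ) + ((k : ℤ) - (l : ℤ))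
    rw [SetPartition.N]
    ring
  have hsig : (SetPartition.sig ({l0} : Finset (Fin k)) : ℤ) = (k : ℤ) - (l : ℤ) := by
    rw [SetPartition.sig_singleton]
    have : (l0 : ℕ) = l - 1 := rfl
    omega
  rw [Finset.sum_congr rfl (fun π _ => hexp π), ← Finset.sum_mul, hmain, hsig]
  rw [mul_comm (q ^ (-((k : ℤ) - (l : ℤ)))) _, mul_assoc, ← zpow_add₀ hq']
  simp
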